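/- Let Y, Z > 0 be real numbers and let D be any real number with D ≥ Z and D ≥ 2Z/Y. Let J ≥ 1 and let u_0, u_1, …, u_J be real numbers with 0 ≤ u_j ≤ min(1, 1/Y²) for all 0 ≤ j ≤ J and u_{j−1} ≤ (1 − Y·√(u_j))·u_j for all 1 ≤ j ≤ J. Define a_0 = 1 and recursively a_j = 2 − 1/a_{j−1} + Z·u_j for 1 ≤ j ≤ J. Then a_j ≥ 1 for every 0 ≤ j ≤ J, and 1 + Z·u_j ≤ a_j ≤ 1 + D·√(u_j) for every 1 ≤ j ≤ J. -/
import Mathlib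


theorem stmt17 (Y Z D : ℝ) (hY : 0 < Y) (hZ : 0 < Z) (hDZ : Z ≤ D) (hDY : 2 * Z / Y ≤ D)
    (J : ℕ) (hJ : 1 ≤ J) (u : ℕ → ℝ)
    (hu : ∀ j : ℕ, j ≤ J → 0 ≤ u j ∧ u j ≤ min 1 (1 / Y ^ 2))
    (hcontr : ∀ j : ℕ, 1 ≤ j → j ≤ J → u (j - 1) ≤ (1 - Y * Real.sqrt (u j)) * u j)
    (a : ℕ → ℝ) (ha0 : a 0 = 1)
    (harec : ∀ j : ℕ, 1 ≤ j → j ≤ J → a j = 2 - 1 / a (j - 1) + Z * u j) :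
    (∀ j : ℕ, j ≤ J → 1 ≤ a j) ∧
      (∀ j : ℕ, 1 ≤ j → j ≤ J → 1 + Z * u j ≤ a j ∧ a j ≤ 1 + D * Real.sqrt (u j)) := by
  have hD : 0 < D := lt_of_lt_of_le hZ hDZ
  have hZY : 2 * Z ≤ D * Y := by
    have := (div_le_iff₀ hY).mp hDY
    linarith
  have key : ∀ j : ℕ, j ≤ J → 1 ≤ a j ∧ a j ≤ 1 + D * Real.sqrt (u j) := by
    intro j
    induction j with
    | zero =>
      intro _
      refine ⟨le_of_eq ha0.symm, ?_⟩
      rw [ha0]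
      have : 0 ≤ D * Real.sqrt (u 0) := mul_nonneg hD.le (Real.sqrt_nonneg _)
      linarith
    | succ n ih =>
      intro hnJ
      obtain ⟨h1, h2⟩ := ih (le_of_lt (Nat.lt_of_lt_of_le (Nat.lt_succ_self n) hnJ))
      have hrec := harec (n + 1) (Nat.le_add_left 1 n) hnJ
      simp only [Nat.add_sub_cancel] at hrec
      obtain ⟨hu0, hu1⟩ := hu (n + 1) hnJ
      have hu1' : u (n + 1) ≤ 1 / Y ^ 2 := le_trans hu1 (min_le_right _ _)
      have han : 0 < a n := lt_of_lt_of_le one_pos h1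
      have hinv : 1 / a n ≤ 1 := by
        rw [div_le_one han]; linarith
      have hZu : 0 ≤ Z * u (n + 1) := mul_nonneg hZ.le hu0
      have hlow : 1 ≤ a (n + 1) := by rw [hrec]; linarith
      refine ⟨hlow, ?_⟩
      -- notation
      set s := Real.sqrt (u (n + 1)) with hs_def
      have hs0 : 0 ≤ s := Real.sqrt_nonneg _
      have hs2 : s ^ 2 = u (n + 1) := Real.sq_sqrt hu0
      have hYs : Y * s ≤ 1 := by
        have h : (Y * s) ^ 2 ≤ 1 := by
          have : Y ^ 2 * u (n + 1) ≤ 1 := by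
            rw [le_div_iff₀ (by positivity)] at hu1'
            linarith
          calc (Y * s) ^ 2 = Y ^ 2 * s ^ 2 := by ring
            _ = Y ^ 2 * u (n + 1) := by rw [hs2]
            _ ≤ 1 := this
        nlinarith [mul_nonneg hY.le hs0]
      have hnn : (0 : ℝ) ≤ 1 - Y * s := by linarith
      have hcontr' := hcontr (n + 1) (Nat.le_add_left 1 n) hnJ
      simp only [Nat.add_sub_cancel] at hcontr'
      have hsqn : Real.sqrt (u n) ≤ (1 - Y * s / 2) * s := by
        have h1' : Real.sqrt (u n) ≤ Real.sqrt ((1 - Y * s) * u (n + 1)) :=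
          Real.sqrt_le_sqrt hcontr'
        have h2' : Real.sqrt ((1 - Y * s) * u (n + 1)) = Real.sqrt (1 - Y * s) * s := by
          rw [Real.sqrt_mul hnn]
        have h3' : Real.sqrt (1 - Y * s) ≤ 1 - Y * s / 2 := by
          have h4 : (1 : ℝ) - Y * s ≤ (1 - Y * s / 2) ^ 2 := by nlinarith [sq_nonneg (Y * s)]
          have h5 := Real.sqrt_le_sqrt h4
          rwa [Real.sqrt_sq (by linarith)] at h5
        calc Real.sqrt (u n) ≤ Real.sqrt (1 - Y * s) * s := by rw [← h2']; exact h1'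
          _ ≤ (1 - Y * s / 2) * s := mul_le_mul_of_nonneg_right h3' hs0
      -- combine
      have hinv2 : 2 - a n ≤ 1 / a n := by
        rw [le_div_iff₀ han]; nlinarith [sq_nonneg (a n - 1)]
      have hu_eq : u (n + 1) = s ^ 2 := hs2.symm
      have : a (n + 1) ≤ a n + Z * u (n + 1) := by rw [hrec]; linarith
      calc a (n + 1) ≤ a n + Z * u (n + 1) := this
        _ ≤ 1 + D * Real.sqrt (u n) + Z * u (n + 1) := by linarith
        _ ≤ 1 + D * ((1 - Y * s / 2) * s) + Z * s ^ 2 := by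
            rw [← hu_eq]
            have := mul_le_mul_of_nonneg_left hsqn hD.le
            linarith
        _ ≤ 1 + D * s := by nlinarith [sq_nonneg s]
  refine ⟨fun j hj => (key j hj).1, fun j hj1 hjJ => ?_⟩
  have hrec := harec j hj1 hjJ
  have h1 := (key (j - 1) (le_trans (Nat.sub_le j 1) hjJ)).1
  have han : 0 < a (j - 1) := lt_of_lt_of_le one_pos h1
  have hinv : 1 / a (j - 1) ≤ 1 := by rw [div_le_one han]; linarith
  exact ⟨by rw [hrec]; linarith, (key j hjJ).2⟩
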